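/- The number of paths of length n from the empty diagram in the oscillating Young graph (where at each step one box is added or removed from a Young diagram) ending at the empty diagram equals (n−1)!! when n is even (and 0 when n is odd); in particular the total number of oscillating tableaux of length n ending anywhere, weighted by the square of multiplicities, is (2n−1)!! = dim BMW_n. -/

import Mathlib

open scoped Nat

/-- An oscillating tableau of length `n`: a sequence of Young diagrams starting at `∅`
in which consecutive diagrams differ by adding or removing exactly one box. -/
def IsOscillatingTableau (n : ℕ) (f : Fin (n + 1) → YoungDiagram) : Prop :=
  f 0 = ⊥ ∧ ∀ k : Fin n,
    (f k.castSucc ≤ f k.succ ∧ (f k.succ).card = (f k.castSucc).card + 1) ∨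
    (f k.succ ≤ f k.castSucc ∧ (f k.castSucc).card = (f k.succ).card + 1)

namespace OscTab

instance : DecidableEq YoungDiagram := fun μ ν =>
  decidable_of_iff (μ.cells = ν.cells) ⟨fun h => YoungDiagram.ext (h ▸ rfl), fun h => by rw [h]⟩

/-- rows where a cell can be added at the end. -/
def addable (μ : YoungDiagram) (i : ℕ) : Prop :=
  i = 0 ∨ μ.rowLen i < μ.rowLen (i - 1)

instance (μ : YoungDiagram) (i : ℕ) : Decidable (addable μ i) := by
  unfold addable; infer_instance

/-- rows whose last cell can be removed. -/
def removable (μ : YoungDiagram) (i : ℕ) : Prop := μ.rowLen (i + 1) < μ.rowLen i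

instance (μ : YoungDiagram) (i : ℕ) : Decidable (removable μ i) := by
  unfold removable; infer_instance

lemma addable_succ_iff (μ : YoungDiagram) (i : ℕ) :
    addable μ (i + 1) ↔ removable μ i := by
  simp [addable, removable]

def addCell (μ : YoungDiagram) (i : ℕ) (h : addable μ i) : YoungDiagram where
  cells := insert (i, μ.rowLen i) μ.cells
  isLowerSet := by
    intro c d hle hc
    simp only [Finset.coe_insert, Set.mem_insert_iff, Finset.mem_coe,
      YoungDiagram.mem_cells] at hc ⊢
    obtain ⟨a, b⟩ := d
    obtain ⟨ci, cj⟩ := c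
    obtain ⟨h1, h2⟩ : a ≤ ci ∧ b ≤ cj := ⟨hle.1, hle.2⟩
    obtain hc | hc := hc
    · have hci : ci = i := congrArg Prod.fst hc
      have hcj : cj = μ.rowLen i := congrArg Prod.snd hc
      rcases Nat.lt_or_ge b (μ.rowLen i) with hb | hb
      · right
        rw [YoungDiagram.mem_iff_lt_rowLen]
        exact hb.trans_le (μ.rowLen_anti _ _ (by omega))
      · have hb' : b = μ.rowLen i := by omega
        rcases Nat.lt_or_ge a i with ha | ha
        · right
          rw [YoungDiagram.mem_iff_lt_rowLen]
          rcases h with h | h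
          · omega
          · have : μ.rowLen (i - 1) ≤ μ.rowLen a := μ.rowLen_anti _ _ (by omega)
            omega
        · left
          have : a = i := by omega
          simp [this, hb']
    · right
      exact μ.isLowerSet hle hc

lemma not_mem_rowLen (μ : YoungDiagram) (i : ℕ) : (i, μ.rowLen i) ∉ μ := by
  rw [YoungDiagram.mem_iff_lt_rowLen]; omega

lemma le_addCell (μ : YoungDiagram) (i : ℕ) (h : addable μ i) : μ ≤ addCell μ i h := by
  rw [← YoungDiagram.cells_subset_iff]
  exact Finset.subset_insert _ _

lemma card_addCell (μ : YoungDiagram) (i : ℕ) (h : addable μ i) :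
    (addCell μ i h).card = μ.card + 1 := by
  show (insert (i, μ.rowLen i) μ.cells).card = _
  rw [Finset.card_insert_of_notMem (by simpa using not_mem_rowLen μ i)]

lemma mem_addCell (μ : YoungDiagram) (i : ℕ) (h : addable μ i) (c : ℕ × ℕ) :
    c ∈ addCell μ i h ↔ c = (i, μ.rowLen i) ∨ c ∈ μ := by
  show c ∈ insert (i, μ.rowLen i) μ.cells ↔ _
  simp only [addCell, YoungDiagram.mem_mk, Finset.mem_insert, YoungDiagram.mem_cells]

lemma rowLen_addCell (μ : YoungDiagram) (i : ℕ) (h : addable μ i) (j : ℕ) :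
    (addCell μ i h).rowLen j = if j = i then μ.rowLen i + 1 else μ.rowLen j := by
  have key : ∀ m, (j, m) ∈ addCell μ i h ↔ m < (addCell μ i h).rowLen j := fun m =>
    YoungDiagram.mem_iff_lt_rowLen
  split_ifs with hj
  · subst hj
    have h1 : (j, μ.rowLen j) ∈ addCell μ j h := by rw [mem_addCell]; left; rfl
    have h2 : (j, μ.rowLen j + 1) ∉ addCell μ j h := by
      rw [mem_addCell]
      push_neg
      refine ⟨by simp, ?_⟩
      rw [YoungDiagram.mem_iff_lt_rowLen]; omega
    rw [key] at h1
    rw [key] at h2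
    omega
  · have h3 : ∀ m, (j, m) ∈ addCell μ i h ↔ (j, m) ∈ μ := by
      intro m
      rw [mem_addCell]
      constructor
      · rintro (hc | hc)
        · exact absurd (congrArg Prod.fst hc) hj
        · exact hc
      · exact fun hc => Or.inr hc
    have h4 := h3 (μ.rowLen j)
    have h5 := h3 ((addCell μ i h).rowLen j)
    rw [key] at h4 h5
    rw [YoungDiagram.mem_iff_lt_rowLen] at h4 h5
    omega


lemma addable_bound (μ : YoungDiagram) (i : ℕ) (h : addable μ i) : i < μ.colLen 0 + 1 := by
  rcases h with h | h
  · omega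
  · have : (i - 1, 0) ∈ μ := by rw [YoungDiagram.mem_iff_lt_rowLen]; omega
    rw [YoungDiagram.mem_iff_lt_colLen] at this
    omega

lemma removable_bound (μ : YoungDiagram) (i : ℕ) (h : removable μ i) : i < μ.colLen 0 := by
  have : (i, 0) ∈ μ := by rw [YoungDiagram.mem_iff_lt_rowLen]; unfold removable at h; omega
  rw [YoungDiagram.mem_iff_lt_colLen] at this
  exact this

/-- the set of addable row indices -/
def addables (μ : YoungDiagram) : Finset ℕ :=
  (Finset.range (μ.colLen 0 + 1)).filter (addable μ)

/-- the set of removable row indices -/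
def removables (μ : YoungDiagram) : Finset ℕ :=
  (Finset.range (μ.colLen 0 + 1)).filter (removable μ)

lemma mem_addables {μ : YoungDiagram} {i : ℕ} : i ∈ addables μ ↔ addable μ i := by
  simp only [addables, Finset.mem_filter, Finset.mem_range]
  exact ⟨fun h => h.2, fun h => ⟨addable_bound μ i h, h⟩⟩

lemma mem_removables {μ : YoungDiagram} {i : ℕ} : i ∈ removables μ ↔ removable μ i := by
  simp only [removables, Finset.mem_filter, Finset.mem_range]
  exact ⟨fun h => h.2, fun h => ⟨(removable_bound μ i h).trans (by omega), h⟩⟩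

lemma card_addables (μ : YoungDiagram) : (addables μ).card = (removables μ).card + 1 := by
  have : addables μ = insert 0 ((removables μ).image (· + 1)) := by
    ext i
    rw [mem_addables, Finset.mem_insert, Finset.mem_image]
    constructor
    · rintro (rfl | h)
      · left; rfl
      · right
        cases i with
        | zero => simp at h
        | succ j => exact ⟨j, mem_removables.2 (by simpa [removable] using h), rfl⟩
    · rintro (rfl | ⟨j, hj, rfl⟩)
      · left; rfl
      · right
        rw [mem_removables] at hj
        simpa [removable] using hj
  rw [this, Finset.card_insert_of_notMem (by simp), Finset.card_image_of_injective _
    (fun a b => by omega)]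

/-- the covers of `μ`: diagrams obtained by adding one cell. -/
def covers (μ : YoungDiagram) : Finset YoungDiagram :=
  (addables μ).attach.image fun i => addCell μ i.1 (mem_addables.1 i.2)

lemma mem_covers {μ ν : YoungDiagram} :
    ν ∈ covers μ ↔ μ ≤ ν ∧ ν.card = μ.card + 1 := by
  constructor
  · intro h
    simp only [covers, Finset.mem_image, Finset.mem_attach, true_and, Subtype.exists] at h
    obtain ⟨i, hi, rfl⟩ := h
    exact ⟨le_addCell _ _ _, card_addCell _ _ _⟩
  · rintro ⟨hle, hcard⟩
    -- ν = μ plus one cell c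
    have hsub : μ.cells ⊆ ν.cells := YoungDiagram.cells_subset_iff.2 hle
    have hcard' : ν.cells.card = μ.cells.card + 1 := hcard
    have hd : (ν.cells \ μ.cells).card = 1 := by
      rw [Finset.card_sdiff_of_subset hsub]; omega
    obtain ⟨c, hc⟩ := Finset.card_eq_one.1 hd
    have hcell : ∀ x, x ∈ ν ↔ x = c ∨ x ∈ μ := by
      intro x
      rw [← YoungDiagram.mem_cells, ← YoungDiagram.mem_cells]
      constructor
      · intro hx
        by_cases hxμ : x ∈ μ.cells
        · exact Or.inr hxμ
        · left
          have : x ∈ ν.cells \ μ.cells := Finset.mem_sdiff.2 ⟨hx, hxμ⟩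
          rw [hc] at this
          simpa using this
      · rintro (rfl | hx)
        · have hxx : x ∈ ν.cells \ μ.cells := by
            rw [hc]; exact Finset.mem_singleton_self x
          exact (Finset.mem_sdiff.1 hxx).1
        · exact hsub hx
    obtain ⟨i, j⟩ := c
    have hcν : (i, j) ∈ ν := (hcell (i, j)).2 (Or.inl rfl)
    have hcμ : (i, j) ∉ μ := by
      intro hx
      have : (i, j) ∈ ν.cells \ μ.cells := by rw [hc]; simp
      exact (Finset.mem_sdiff.1 this).2 (YoungDiagram.mem_cells _ |>.2 hx)
    -- j = μ.rowLen i
    have hj : j = μ.rowLen i := by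
      refine le_antisymm ?_ ?_
      · by_contra hlt
        push_neg at hlt
        have h1 : (i, μ.rowLen i) ∈ ν := ν.up_left_mem le_rfl (by omega) hcν
        have h2 := (hcell (i, μ.rowLen i)).1 h1
        rcases h2 with h2 | h2
        · have := congrArg Prod.snd h2; simp at this; omega
        · exact not_mem_rowLen μ i h2
      · by_contra hlt
        push_neg at hlt
        exact hcμ (YoungDiagram.mem_iff_lt_rowLen.2 hlt)
    subst hj
    have hadd : addable μ i := by
      rcases Nat.eq_zero_or_pos i with rfl | hi
      · exact Or.inl rfl
      · right
        have h1 : (i - 1, μ.rowLen i) ∈ ν := ν.up_left_mem (by omega) le_rfl hcν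
        have h2 := (hcell _).1 h1
        rcases h2 with h2 | h2
        · have := congrArg Prod.fst h2; simp at this; omega
        · rw [YoungDiagram.mem_iff_lt_rowLen] at h2; exact h2
    have : ν = addCell μ i hadd := by
      ext x
      rw [YoungDiagram.mem_cells, YoungDiagram.mem_cells, hcell, mem_addCell]
    rw [this]
    simp only [covers, Finset.mem_image, Finset.mem_attach, true_and, Subtype.exists]
    exact ⟨i, mem_addables.2 hadd, rfl⟩

def eraseCell (μ : YoungDiagram) (i : ℕ) (h : removable μ i) : YoungDiagram where
  cells := μ.cells.erase (i, μ.rowLen i - 1)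
  isLowerSet := by
    intro c d hle hc
    rw [Finset.coe_erase, Set.mem_diff] at hc ⊢
    obtain ⟨hc1, hc2⟩ := hc
    rw [Finset.mem_coe, YoungDiagram.mem_cells] at hc1
    refine ⟨Finset.mem_coe.2 (YoungDiagram.mem_cells _ |>.2 (μ.isLowerSet hle hc1)), ?_⟩
    intro hd
    rw [Set.mem_singleton_iff] at hd
    subst hd
    have hr : 0 < μ.rowLen i := by unfold removable at h; omega
    obtain ⟨h1, h2⟩ : i ≤ c.1 ∧ μ.rowLen i - 1 ≤ c.2 := ⟨hle.1, hle.2⟩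
    rcases Nat.lt_or_ge i c.1 with hi | hi
    · have : (i + 1, μ.rowLen i - 1) ∈ μ := μ.up_left_mem (by omega) h2 hc1
      rw [YoungDiagram.mem_iff_lt_rowLen] at this
      unfold removable at h
      omega
    · have hci : c.1 = i := by omega
      have : c.2 < μ.rowLen i := by
        rw [← hci, ← YoungDiagram.mem_iff_lt_rowLen]
        exact (show ((c.1), c.2) ∈ μ from hc1)
      apply hc2
      rw [Set.mem_singleton_iff]
      ext <;> simp <;> omega

lemma corner_mem (μ : YoungDiagram) (i : ℕ) (h : removable μ i) :
    (i, μ.rowLen i - 1) ∈ μ := by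
  rw [YoungDiagram.mem_iff_lt_rowLen]
  unfold removable at h
  omega

lemma mem_eraseCell (μ : YoungDiagram) (i : ℕ) (h : removable μ i) (c : ℕ × ℕ) :
    c ∈ eraseCell μ i h ↔ c ∈ μ ∧ c ≠ (i, μ.rowLen i - 1) := by
  show c ∈ μ.cells.erase (i, μ.rowLen i - 1) ↔ _
  simp only [eraseCell, YoungDiagram.mem_mk, Finset.mem_erase, YoungDiagram.mem_cells]
  tauto

lemma eraseCell_le (μ : YoungDiagram) (i : ℕ) (h : removable μ i) : eraseCell μ i h ≤ μ := by
  rw [← YoungDiagram.cells_subset_iff]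
  exact Finset.erase_subset _ _

lemma card_eraseCell (μ : YoungDiagram) (i : ℕ) (h : removable μ i) :
    μ.card = (eraseCell μ i h).card + 1 := by
  show μ.cells.card = (μ.cells.erase _).card + 1
  rw [Finset.card_erase_of_mem (by simpa using corner_mem μ i h)]
  have : 0 < μ.cells.card := Finset.card_pos.2 ⟨_, by simpa using corner_mem μ i h⟩
  omega

/-- the cocovers of `μ`: diagrams obtained by removing one cell. -/
def cocovers (μ : YoungDiagram) : Finset YoungDiagram :=
  (removables μ).attach.image fun i => eraseCell μ i.1 (mem_removables.1 i.2)

lemma covers_rep {μ ν : YoungDiagram} (h : ν ∈ covers μ) :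
    ∃ i hi, ν = addCell μ i hi := by
  simp only [covers, Finset.mem_image, Finset.mem_attach, true_and, Subtype.exists] at h
  obtain ⟨i, hi, rfl⟩ := h
  exact ⟨i, _, rfl⟩

lemma mem_cocovers {μ ν : YoungDiagram} :
    ν ∈ cocovers μ ↔ ν ≤ μ ∧ μ.card = ν.card + 1 := by
  constructor
  · intro h
    simp only [cocovers, Finset.mem_image, Finset.mem_attach, true_and, Subtype.exists] at h
    obtain ⟨i, hi, rfl⟩ := h
    exact ⟨eraseCell_le _ _ _, card_eraseCell _ _ _⟩
  · rintro ⟨hle, hcard⟩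
    obtain ⟨i, hadd, rfl⟩ := covers_rep (mem_covers.2 ⟨hle, hcard⟩)
    have hrow := rowLen_addCell ν i hadd
    have hrem : removable (addCell ν i hadd) i := by
      have e1 : (addCell ν i hadd).rowLen i = ν.rowLen i + 1 := by
        rw [hrow i, if_pos rfl]
      have e2 : (addCell ν i hadd).rowLen (i + 1) = ν.rowLen (i + 1) := by
        rw [hrow (i + 1), if_neg (by omega : ¬ i + 1 = i)]
      unfold removable
      rw [e1, e2]
      have := ν.rowLen_anti i (i + 1) (by omega)
      omega
    have : eraseCell (addCell ν i hadd) i hrem = ν := by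
      ext c
      rw [YoungDiagram.mem_cells, YoungDiagram.mem_cells, mem_eraseCell, mem_addCell]
      have h1 : (addCell ν i hadd).rowLen i - 1 = ν.rowLen i := by rw [hrow i]; simp
      rw [h1]
      constructor
      · rintro ⟨hc1 | hc1, hc2⟩
        · exact absurd hc1 hc2
        · exact hc1
      · intro hc
        exact ⟨Or.inr hc, fun hne => not_mem_rowLen ν i (hne ▸ hc)⟩
    simp only [cocovers, Finset.mem_image, Finset.mem_attach, true_and, Subtype.exists]
    exact ⟨i, mem_removables.2 hrem, this⟩

lemma card_covers (μ : YoungDiagram) :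
    (covers μ).card = (cocovers μ).card + 1 := by
  have h1 : (covers μ).card = (addables μ).card := by
    rw [covers, Finset.card_image_of_injective, Finset.card_attach]
    rintro ⟨i, hi⟩ ⟨j, hj⟩ hij
    change addCell μ i (mem_addables.1 hi) = addCell μ j (mem_addables.1 hj) at hij
    have hmi : (i, μ.rowLen i) ∈ addCell μ i (mem_addables.1 hi) := by
      rw [mem_addCell]; left; rfl
    rw [hij] at hmi
    rw [mem_addCell] at hmi
    rcases hmi with hmi | hmi
    · exact Subtype.ext (congrArg Prod.fst hmi)
    · exact absurd hmi (not_mem_rowLen μ i)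
  have h2 : (cocovers μ).card = (removables μ).card := by
    rw [cocovers, Finset.card_image_of_injective, Finset.card_attach]
    rintro ⟨i, hi⟩ ⟨j, hj⟩ hij
    change eraseCell μ i (mem_removables.1 hi) = eraseCell μ j (mem_removables.1 hj) at hij
    by_contra hne
    have hne' : i ≠ j := fun h => hne (Subtype.ext h)
    have hmi : (i, μ.rowLen i - 1) ∈ eraseCell μ j (mem_removables.1 hj) := by
      rw [mem_eraseCell]
      refine ⟨corner_mem μ i (mem_removables.1 hi), ?_⟩
      intro hij'
      exact hne' (congrArg Prod.fst hij')
    rw [← hij, mem_eraseCell] at hmi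
    exact hmi.2 rfl
  rw [h1, h2, card_addables]

lemma eq_of_le_card {μ ν : YoungDiagram} (h : μ ≤ ν) (hc : ν.card ≤ μ.card) : μ = ν :=
  YoungDiagram.ext (Finset.eq_of_subset_of_card_le (YoungDiagram.cells_subset_iff.2 h) hc)

lemma card_sup_add_card_inf (μ ν : YoungDiagram) :
    (μ ⊔ ν).card + (μ ⊓ ν).card = μ.card + ν.card := by
  show (μ ⊔ ν).cells.card + (μ ⊓ ν).cells.card = _
  rw [YoungDiagram.cells_sup, YoungDiagram.cells_inf]
  exact Finset.card_union_add_card_inter _ _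

/-- the key commutation identity: common covers vs common cocovers. -/
lemma card_inter_covers (μ ν : YoungDiagram) :
    (covers μ ∩ covers ν).card =
      (cocovers μ ∩ cocovers ν).card + (if μ = ν then 1 else 0) := by
  split_ifs with hμν
  · subst hμν
    simp only [Finset.inter_self]
    exact card_covers μ
  · rw [Nat.add_zero]
    by_cases hc : μ.card = ν.card
    · -- same size, different diagrams
      have hsup1 : μ < μ ⊔ ν := by
        refine lt_of_le_of_ne le_sup_left fun h => hμν ?_
        have hν : ν ≤ μ := h ▸ le_sup_right
        exact (eq_of_le_card hν (by omega)).symm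
      have hsupcard : μ.card < (μ ⊔ ν).card :=
        Finset.card_lt_card (YoungDiagram.cells_ssubset_iff.2 hsup1)
      have hinfcard : (μ ⊓ ν).card + 1 ≤ μ.card := by
        have h2 := card_sup_add_card_inf μ ν
        omega
      have hA : covers μ ∩ covers ν =
          if (μ ⊔ ν).card = μ.card + 1 then {μ ⊔ ν} else ∅ := by
        ext κ
        rw [Finset.mem_inter, mem_covers, mem_covers]
        split_ifs with hcond
        · rw [Finset.mem_singleton]
          constructor
          · rintro ⟨⟨h1, h2⟩, h3, _⟩
            have hle : μ ⊔ ν ≤ κ := sup_le h1 h3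
            exact (eq_of_le_card hle (by omega)).symm
          · rintro rfl
            exact ⟨⟨le_sup_left, hcond⟩, le_sup_right, by omega⟩
        · simp only [Finset.notMem_empty, iff_false]
          rintro ⟨⟨h1, h2⟩, h3, _⟩
          have hle : μ ⊔ ν ≤ κ := sup_le h1 h3
          have hcc : (μ ⊔ ν).card ≤ κ.card :=
            Finset.card_le_card (YoungDiagram.cells_subset_iff.2 hle)
          apply hcond
          omega
      have hB : cocovers μ ∩ cocovers ν =
          if (μ ⊓ ν).card + 1 = μ.card then {μ ⊓ ν} else ∅ := by
        ext κ
        rw [Finset.mem_inter, mem_cocovers, mem_cocovers]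
        split_ifs with hcond
        · rw [Finset.mem_singleton]
          constructor
          · rintro ⟨⟨h1, h2⟩, h3, _⟩
            have hle : κ ≤ μ ⊓ ν := le_inf h1 h3
            exact eq_of_le_card hle (by omega)
          · rintro rfl
            exact ⟨⟨inf_le_left, by omega⟩, inf_le_right, by omega⟩
        · simp only [Finset.notMem_empty, iff_false]
          rintro ⟨⟨h1, h2⟩, h3, _⟩
          have hle : κ ≤ μ ⊓ ν := le_inf h1 h3
          have hcc : κ.card ≤ (μ ⊓ ν).card :=
            Finset.card_le_card (YoungDiagram.cells_subset_iff.2 hle)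
          apply hcond
          omega
      rw [hA, hB]
      have hiff : (μ ⊔ ν).card = μ.card + 1 ↔ (μ ⊓ ν).card + 1 = μ.card := by
        have := card_sup_add_card_inf μ ν
        omega
      by_cases hcond : (μ ⊔ ν).card = μ.card + 1
      · rw [if_pos hcond, if_pos (hiff.1 hcond)]
        simp
      · rw [if_neg hcond, if_neg (fun h => hcond (hiff.2 h))]
    · -- different sizes: both empty
      have hA : covers μ ∩ covers ν = ∅ := by
        ext κ
        rw [Finset.mem_inter, mem_covers, mem_covers]
        simp only [Finset.notMem_empty, iff_false]
        rintro ⟨⟨_, h2⟩, _, h4⟩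
        omega
      have hB : cocovers μ ∩ cocovers ν = ∅ := by
        ext κ
        rw [Finset.mem_inter, mem_cocovers, mem_cocovers]
        simp only [Finset.notMem_empty, iff_false]
        rintro ⟨⟨_, h2⟩, _, h4⟩
        omega
      rw [hA, hB]

lemma covers_cocovers_disjoint (μ : YoungDiagram) : Disjoint (covers μ) (cocovers μ) := by
  rw [Finset.disjoint_left]
  intro κ h1 h2
  rw [mem_covers] at h1
  rw [mem_cocovers] at h2
  omega

lemma cocovers_bot : cocovers ⊥ = ∅ := by
  ext κ
  rw [mem_cocovers]
  simp only [Finset.notMem_empty, iff_false]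
  rintro ⟨_, h⟩
  have : (⊥ : YoungDiagram).card = 0 := by simp [YoungDiagram.card]
  omega

lemma bot_not_mem_covers (μ : YoungDiagram) : (⊥ : YoungDiagram) ∉ covers μ := by
  rw [mem_covers]
  rintro ⟨_, h⟩
  have : (⊥ : YoungDiagram).card = 0 := by simp [YoungDiagram.card]
  omega

abbrev M : Type := YoungDiagram →₀ ℕ

/-- sum of a finsupp over a finset equals support-filtered sum -/
lemma sum_finset_eq_support (x : M) (t : Finset YoungDiagram) :
    ∑ μ ∈ t, x μ = ∑ la ∈ x.support, x la * (if la ∈ t then 1 else 0) := by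
  have h1 : ∑ la ∈ x.support, x la * (if la ∈ t then 1 else 0)
      = ∑ la ∈ x.support ∩ t, x la := by
    simp only [mul_ite, mul_one, mul_zero]
    exact Finset.sum_ite_mem _ _ _
  rw [h1, Finset.inter_comm]
  exact (Finset.sum_subset Finset.inter_subset_left (fun μ hμ hne => by
    rw [Finsupp.notMem_support_iff.1 (fun hs => hne (Finset.mem_inter.2 ⟨hμ, hs⟩))])).symm

noncomputable def mkLin (g : YoungDiagram → M) : M →ₗ[ℕ] M :=
  Finsupp.lsum ℕ fun la => (LinearMap.id : ℕ →ₗ[ℕ] ℕ).smulRight (g la)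

lemma mkLin_single (g : YoungDiagram → M) (la : YoungDiagram) (b : ℕ) :
    mkLin g (Finsupp.single la b) = b • g la := by
  simp [mkLin]

noncomputable def Uc (la : YoungDiagram) : M := ∑ μ ∈ covers la, Finsupp.single μ 1
noncomputable def Dc (la : YoungDiagram) : M := ∑ μ ∈ cocovers la, Finsupp.single μ 1

noncomputable def U : M →ₗ[ℕ] M := mkLin Uc
noncomputable def D : M →ₗ[ℕ] M := mkLin Dc

lemma Uc_apply (la κ : YoungDiagram) : Uc la κ = if κ ∈ covers la then 1 else 0 := by
  rw [Uc, Finsupp.finset_sum_apply]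
  rw [Finset.sum_congr rfl (fun μ _ => Finsupp.single_apply)]
  rw [Finset.sum_ite_eq' (covers la) κ (fun _ => 1)]

lemma Dc_apply (la κ : YoungDiagram) : Dc la κ = if κ ∈ cocovers la then 1 else 0 := by
  rw [Dc, Finsupp.finset_sum_apply]
  rw [Finset.sum_congr rfl (fun μ _ => Finsupp.single_apply)]
  rw [Finset.sum_ite_eq' (cocovers la) κ (fun _ => 1)]

lemma mem_cocovers_iff_mem_covers (μ κ : YoungDiagram) :
    κ ∈ cocovers μ ↔ μ ∈ covers κ := by
  rw [mem_cocovers, mem_covers]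

lemma mem_covers_iff_mem_cocovers (μ κ : YoungDiagram) :
    κ ∈ covers μ ↔ μ ∈ cocovers κ := by
  rw [mem_cocovers, mem_covers]

/-- apply formula for U -/
lemma U_apply (x : M) (κ : YoungDiagram) : U x κ = ∑ μ ∈ cocovers κ, x μ := by
  rw [sum_finset_eq_support x (cocovers κ)]
  rw [U, mkLin, Finsupp.lsum_apply]
  rw [Finsupp.sum, Finsupp.finset_sum_apply]
  apply Finset.sum_congr rfl
  intro la _
  simp only [LinearMap.smulRight_apply, LinearMap.id_apply, smul_eq_mul]
  rw [Finsupp.smul_apply, Uc_apply, smul_eq_mul]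
  congr 1
  exact if_congr (mem_covers_iff_mem_cocovers la κ) rfl rfl

/-- apply formula for D -/
lemma D_apply (x : M) (κ : YoungDiagram) : D x κ = ∑ μ ∈ covers κ, x μ := by
  rw [sum_finset_eq_support x (covers κ)]
  rw [D, mkLin, Finsupp.lsum_apply]
  rw [Finsupp.sum, Finsupp.finset_sum_apply]
  apply Finset.sum_congr rfl
  intro la _
  simp only [LinearMap.smulRight_apply, LinearMap.id_apply, smul_eq_mul]
  rw [Finsupp.smul_apply, Dc_apply, smul_eq_mul]
  congr 1
  exact if_congr (mem_cocovers_iff_mem_covers la κ) rfl rfl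

lemma U_single (la : YoungDiagram) (b : ℕ) : U (Finsupp.single la b) = b • Uc la :=
  mkLin_single _ _ _

lemma D_single (la : YoungDiagram) (b : ℕ) : D (Finsupp.single la b) = b • Dc la :=
  mkLin_single _ _ _

/-- commutation relation DU = UD + 1 -/
lemma D_U_comm (x : M) : D (U x) = U (D x) + x := by
  have key : (D ∘ₗ U) = (U ∘ₗ D) + LinearMap.id := by
    apply Finsupp.lhom_ext
    intro la b
    ext κ
    simp only [LinearMap.comp_apply, LinearMap.add_apply, LinearMap.id_apply]
    rw [U_single, D_single, map_smul, map_smul]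
    have hU : D (Uc la) κ = (covers la ∩ covers κ).card := by
      rw [D_apply]
      rw [sum_finset_eq_support]
      rw [← sum_finset_eq_support (Uc la) (covers κ)]
      rw [Finset.sum_congr rfl (fun μ _ => Uc_apply la μ)]
      rw [Finset.sum_ite_mem, Finset.sum_const, smul_eq_mul, mul_one, Finset.inter_comm]
    have hD : U (Dc la) κ = (cocovers la ∩ cocovers κ).card := by
      rw [U_apply]
      rw [Finset.sum_congr rfl (fun μ _ => Dc_apply la μ)]
      rw [Finset.sum_ite_mem, Finset.sum_const, smul_eq_mul, mul_one, Finset.inter_comm]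
    rw [Finsupp.add_apply, Finsupp.smul_apply, Finsupp.smul_apply, hU, hD,
      card_inter_covers la κ, Finsupp.single_apply]
    simp only [smul_eq_mul]
    split_ifs <;> ring
  have := LinearMap.congr_fun key x
  simpa using this

/-- the walk-counting vectors -/
noncomputable def v : ℕ → M
  | 0 => Finsupp.single ⊥ 1
  | n + 1 => U (v n) + D (v n)

lemma D_v_zero : D (v 0) = 0 := by
  rw [v, D, mkLin_single, one_smul, Dc, cocovers_bot, Finset.sum_empty]

lemma D_v (n : ℕ) : D (v (n + 1)) = (n + 1) • v n := by
  induction n with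
  | zero =>
    show D (U (v 0) + D (v 0)) = _
    rw [D_v_zero, map_add, map_zero, add_zero, D_U_comm, D_v_zero, map_zero, zero_add]
    norm_num
  | succ n ih =>
    show D (U (v (n + 1)) + D (v (n + 1))) = _
    rw [map_add, D_U_comm, ih, map_smul, map_smul]
    have h1 : (n+1) • U (v n) + (n+1) • D (v n) = (n+1) • v (n+1) := by
      rw [← smul_add]; rfl
    calc (n+1) • U (v n) + v (n + 1) + (n+1) • D (v n)
        = ((n+1) • U (v n) + (n+1) • D (v n)) + v (n+1) := add_right_comm _ _ _
      _ = (n+1) • v (n+1) + 1 • v (n+1) := by rw [h1, one_smul]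
      _ = (n + 1 + 1) • v (n + 1) := by rw [← add_smul]

/-- neighbors: diagrams adjacent to κ -/
noncomputable def nbr (κ : YoungDiagram) : Finset YoungDiagram := covers κ ∪ cocovers κ

lemma v_zero_apply (κ : YoungDiagram) : v 0 κ = if κ = ⊥ then 1 else 0 := by
  show (Finsupp.single ⊥ 1) κ = _
  rw [Finsupp.single_apply]
  split_ifs with h1 h2 h2 <;> first | rfl | (exfalso; first | exact h2 h1.symm | exact h1 h2.symm)

lemma v_succ_apply (n : ℕ) (κ : YoungDiagram) :
    v (n + 1) κ = ∑ μ ∈ nbr κ, v n μ := by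
  show (U (v n) + D (v n)) κ = _
  rw [Finsupp.add_apply, U_apply, D_apply, nbr,
    Finset.sum_union (covers_cocovers_disjoint κ)]
  exact add_comm _ _

lemma U_apply_bot (x : M) : U x ⊥ = 0 := by
  rw [U_apply, cocovers_bot, Finset.sum_empty]

lemma v_bot_zero : v 0 ⊥ = 1 := Finsupp.single_eq_same

lemma v_bot_one : v 1 ⊥ = 0 := by
  show (U (v 0) + D (v 0)) ⊥ = 0
  rw [Finsupp.add_apply, U_apply_bot, D_v_zero]
  simp

lemma v_bot_step (n : ℕ) : v (n + 2) ⊥ = (n + 1) * v n ⊥ := by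
  show (U (v (n + 1)) + D (v (n + 1))) ⊥ = _
  rw [Finsupp.add_apply, U_apply_bot, D_v n]
  simp

lemma v_bot_even (m : ℕ) : v (2 * m) ⊥ = (2 * m - 1)‼ := by
  induction m with
  | zero => simpa using v_bot_zero
  | succ m ih =>
    have h : 2 * (m + 1) = 2 * m + 2 := by ring
    rw [h, v_bot_step, ih]
    cases m with
    | zero => simp [Nat.doubleFactorial]
    | succ m =>
      have h1 : 2 * (m + 1) + 2 - 1 = (2 * (m + 1) - 1) + 2 := by omega
      rw [h1, Nat.doubleFactorial_add_two]
      congr 1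

lemma v_bot_odd (m : ℕ) : v (2 * m + 1) ⊥ = 0 := by
  induction m with
  | zero => exact v_bot_one
  | succ m ih =>
    have h : 2 * (m + 1) + 1 = (2 * m + 1) + 2 := by ring
    rw [h, v_bot_step, ih, mul_zero]

/-- the bilinear pairing -/
noncomputable def BL (y : M) : M →ₗ[ℕ] ℕ :=
  Finsupp.lsum ℕ fun la => (LinearMap.id : ℕ →ₗ[ℕ] ℕ).smulRight (y la)

lemma BL_single (y : M) (la : YoungDiagram) (b : ℕ) :
    BL y (Finsupp.single la b) = b * y la := by
  simp [BL]

lemma BL_eq_sum (y x : M) : BL y x = ∑ la ∈ x.support, x la * y la := by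
  rw [BL, Finsupp.lsum_apply, Finsupp.sum]
  apply Finset.sum_congr rfl
  intro la _
  simp

lemma BL_symm (y x : M) : BL y x = BL x y := by
  rw [BL_eq_sum, BL_eq_sum]
  rw [Finset.sum_subset (Finset.subset_union_left : x.support ⊆ x.support ∪ y.support)
    (fun la _ h => by rw [Finsupp.notMem_support_iff.1 h, zero_mul])]
  rw [Finset.sum_subset (Finset.subset_union_left : y.support ⊆ y.support ∪ x.support)
    (fun la _ h => by rw [Finsupp.notMem_support_iff.1 h, zero_mul])]
  rw [Finset.union_comm]
  exact Finset.sum_congr rfl fun la _ => mul_comm _ _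

lemma BL_add_left (a b x : M) : BL (a + b) x = BL a x + BL b x := by
  rw [BL_symm, BL_symm a x, BL_symm b x, map_add]

lemma BL_adj_U (y x : M) : BL y (U x) = BL (D y) x := by
  have key : (BL y) ∘ₗ U = BL (D y) := by
    apply Finsupp.lhom_ext
    intro la b
    rw [LinearMap.comp_apply, U_single, map_smul, BL_single, smul_eq_mul]
    have h1 : BL y (Uc la) = ∑ μ ∈ covers la, y μ := by
      rw [Uc, map_sum]
      exact Finset.sum_congr rfl fun μ _ => by rw [BL_single, one_mul]
    rw [h1, ← D_apply]
  exact LinearMap.congr_fun key x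

lemma BL_adj_D (y x : M) : BL y (D x) = BL (U y) x := by
  have key : (BL y) ∘ₗ D = BL (U y) := by
    apply Finsupp.lhom_ext
    intro la b
    rw [LinearMap.comp_apply, D_single, map_smul, BL_single, smul_eq_mul]
    have h1 : BL y (Dc la) = ∑ μ ∈ cocovers la, y μ := by
      rw [Dc, map_sum]
      exact Finset.sum_congr rfl fun μ _ => by rw [BL_single, one_mul]
    rw [h1, ← U_apply]
  exact LinearMap.congr_fun key x

lemma BL_chain (m n : ℕ) : BL (v m) (v (n + 1)) = BL (v (m + 1)) (v n) := by
  have h1 : v (n + 1) = U (v n) + D (v n) := rfl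
  rw [h1, map_add, BL_adj_U, BL_adj_D]
  have h2 : v (m + 1) = U (v m) + D (v m) := rfl
  rw [h2, BL_add_left]
  ring

lemma BL_vv (b a : ℕ) : BL (v a) (v b) = v (a + b) ⊥ := by
  induction b generalizing a with
  | zero =>
    show BL (v a) (Finsupp.single ⊥ 1) = _
    rw [BL_single, one_mul, Nat.add_zero]
  | succ b ih =>
    rw [BL_chain, ih (a + 1)]
    have h : a + 1 + b = a + (b + 1) := by omega
    rw [h]

def WalkTo (n : ℕ) (la : YoungDiagram) : Type :=
  {f : Fin (n + 1) → YoungDiagram // IsOscillatingTableau n f ∧ f (Fin.last n) = la}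

lemma walkTo_zero (la : YoungDiagram) :
    Finite (WalkTo 0 la) ∧ Nat.card (WalkTo 0 la) = v 0 la := by
  have hsub : Subsingleton (WalkTo 0 la) := by
    constructor
    rintro ⟨f, hf, hfl⟩ ⟨g, hg, hgl⟩
    apply Subtype.ext
    funext i
    have hi : i = 0 := Fin.fin_one_eq_zero i
    rw [hi]
    show f 0 = g 0
    rw [hf.1, hg.1]
  refine ⟨@Finite.of_subsingleton _ hsub, ?_⟩
  rw [v_zero_apply]
  by_cases h : la = ⊥
  · rw [if_pos h]
    have hne : Nonempty (WalkTo 0 la) := by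
      refine ⟨⟨fun _ => ⊥, ⟨rfl, fun k => k.elim0⟩, ?_⟩⟩
      rw [h]
    exact Nat.card_eq_one_iff_unique.2 ⟨hsub, hne⟩
  · rw [if_neg h]
    have hem : IsEmpty (WalkTo 0 la) := by
      constructor
      rintro ⟨f, hf, hfl⟩
      apply h
      rw [← hfl]
      have h0 : Fin.last 0 = 0 := rfl
      rw [h0, hf.1]
    exact @Nat.card_of_isEmpty _ hem

lemma snoc_prop (n : ℕ) (la μ : YoungDiagram) (hμ : μ ∈ nbr la)
    (g : Fin (n + 1) → YoungDiagram) (hg : IsOscillatingTableau n g)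
    (hgl : g (Fin.last n) = μ) :
    IsOscillatingTableau (n + 1) (Fin.snoc g la) ∧
      (Fin.snoc g la : Fin (n + 2) → YoungDiagram) (Fin.last (n + 1)) = la := by
  obtain ⟨hg0, hgs⟩ := hg
  refine ⟨⟨?_, ?_⟩, Fin.snoc_last _ _⟩
  · show (Fin.snoc g la : Fin (n + 2) → YoungDiagram) 0 = ⊥
    have h0 : (0 : Fin (n + 2)) = Fin.castSucc 0 := by simp
    rw [h0, Fin.snoc_castSucc, hg0]
  · intro k
    refine Fin.lastCases ?_ ?_ k
    · rw [Fin.succ_last, Fin.snoc_last]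
      have h1 : (Fin.snoc g la : Fin (n + 2) → YoungDiagram) (Fin.castSucc (Fin.last n))
          = μ := by rw [Fin.snoc_castSucc, hgl]
      rw [h1]
      rw [nbr, Finset.mem_union] at hμ
      rcases hμ with h | h
      · rw [mem_covers] at h
        right; exact ⟨h.1, h.2⟩
      · rw [mem_cocovers] at h
        left; exact ⟨h.1, h.2⟩
    · intro j
      have e1 : (Fin.snoc g la : Fin (n + 2) → YoungDiagram) ((Fin.castSucc j).castSucc)
          = g j.castSucc := Fin.snoc_castSucc _ _ _
      have e2 : (Fin.snoc g la : Fin (n + 2) → YoungDiagram) ((Fin.castSucc j).succ)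
          = g j.succ := by rw [Fin.succ_castSucc]; exact Fin.snoc_castSucc _ _ _
      rw [e1, e2]
      exact hgs j

lemma restrict_prop (n : ℕ) (la : YoungDiagram) (f : Fin (n + 2) → YoungDiagram)
    (hf : IsOscillatingTableau (n + 1) f) (hfl : f (Fin.last (n + 1)) = la) :
    f (Fin.castSucc (Fin.last n)) ∈ nbr la ∧
      IsOscillatingTableau n (f ∘ Fin.castSucc) := by
  obtain ⟨hf0, hfs⟩ := hf
  refine ⟨?_, ?_, ?_⟩
  · have hstep := hfs (Fin.last n)
    rw [Fin.succ_last, hfl] at hstep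
    rw [nbr, Finset.mem_union]
    rcases hstep with ⟨h1, h2⟩ | ⟨h1, h2⟩
    · right; rw [mem_cocovers]; exact ⟨h1, h2⟩
    · left; rw [mem_covers]; exact ⟨h1, h2⟩
  · show f (Fin.castSucc 0) = ⊥
    rw [Fin.castSucc_zero, hf0]
  · intro k
    have hstep := hfs k.castSucc
    show (f (Fin.castSucc (Fin.castSucc k)) ≤ f (Fin.castSucc k.succ) ∧ _) ∨ _
    rw [← Fin.succ_castSucc]
    exact hstep

/-- peeling off the last step of a walk -/
noncomputable def walkEquiv (n : ℕ) (la : YoungDiagram) :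
    WalkTo (n + 1) la ≃ Σ μ : (nbr la : Finset YoungDiagram), WalkTo n μ.1 where
  toFun f :=
    ⟨⟨f.1 (Fin.castSucc (Fin.last n)),
      (restrict_prop n la f.1 f.2.1 f.2.2).1⟩,
      ⟨f.1 ∘ Fin.castSucc, (restrict_prop n la f.1 f.2.1 f.2.2).2, rfl⟩⟩
  invFun p :=
    ⟨Fin.snoc p.2.1 la,
      (snoc_prop n la p.1.1 p.1.2 p.2.1 p.2.2.1 p.2.2.2).1,
      (snoc_prop n la p.1.1 p.1.2 p.2.1 p.2.2.1 p.2.2.2).2⟩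
  left_inv := by
    rintro ⟨f, hf, hfl⟩
    apply Subtype.ext
    show Fin.snoc (f ∘ Fin.castSucc) la = f
    funext i
    refine Fin.lastCases ?_ ?_ i
    · rw [Fin.snoc_last, hfl]
    · intro j
      exact Fin.snoc_castSucc _ _ _
  right_inv := by
    rintro ⟨⟨μ, hμ⟩, g, hg, hgl⟩
    refine Sigma.subtype_ext (Subtype.ext ?_) ?_
    · show (Fin.snoc g la : Fin (n + 2) → YoungDiagram) (Fin.castSucc (Fin.last n)) = μ
      rw [Fin.snoc_castSucc, hgl]
    · show (Fin.snoc g la : Fin (n + 2) → YoungDiagram) ∘ Fin.castSucc = g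
      funext j
      exact Fin.snoc_castSucc _ _ _

lemma walkTo_count (n : ℕ) (la : YoungDiagram) :
    Finite (WalkTo n la) ∧ Nat.card (WalkTo n la) = v n la := by
  induction n generalizing la with
  | zero => exact walkTo_zero la
  | succ n ih =>
    have hfin : ∀ μ : (nbr la : Finset YoungDiagram), Finite (WalkTo n μ.1) :=
      fun μ => (ih μ.1).1
    have hfinS : Finite (Σ μ : (nbr la : Finset YoungDiagram), WalkTo n μ.1) := by
      exact Finite.instSigma
    constructor
    · exact Finite.of_equiv _ (walkEquiv n la).symm
    · rw [Nat.card_congr (walkEquiv n la)]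
      letI : ∀ μ : (nbr la : Finset YoungDiagram), Fintype (WalkTo n μ.1) :=
        fun μ => Fintype.ofFinite _
      rw [Nat.card_eq_fintype_card, Fintype.card_sigma]
      rw [v_succ_apply]
      rw [← Finset.sum_coe_sort (nbr la) (fun μ => v n μ)]
      apply Finset.sum_congr rfl
      intro μ _
      rw [← (ih μ.1).2, Nat.card_eq_fintype_card]

lemma endpoint_mem_support (n : ℕ) (f : Fin (n + 1) → YoungDiagram)
    (hf : IsOscillatingTableau n f) : f (Fin.last n) ∈ (v n).support := by
  rw [Finsupp.mem_support_iff]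
  have h := walkTo_count n (f (Fin.last n))
  have hpos : 0 < Nat.card (WalkTo n (f (Fin.last n))) :=
    @Nat.card_pos _ ⟨⟨f, hf, rfl⟩⟩ h.1
  rw [h.2] at hpos
  omega

def PairAt (n : ℕ) (la : YoungDiagram) : Type :=
  {q : (Fin (n + 1) → YoungDiagram) × (Fin (n + 1) → YoungDiagram) //
    (IsOscillatingTableau n q.1 ∧ q.1 (Fin.last n) = la) ∧
    (IsOscillatingTableau n q.2 ∧ q.2 (Fin.last n) = la)}

def pairAtEquiv (n : ℕ) (la : YoungDiagram) :
    PairAt n la ≃ WalkTo n la × WalkTo n la where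
  toFun q := (⟨q.1.1, q.2.1⟩, ⟨q.1.2, q.2.2⟩)
  invFun q := ⟨(q.1.1, q.2.1), ⟨q.1.2, q.2.2⟩⟩
  left_inv q := rfl
  right_inv q := rfl

def PairT (n : ℕ) : Type :=
  {p : (Fin (n + 1) → YoungDiagram) × (Fin (n + 1) → YoungDiagram) //
    IsOscillatingTableau n p.1 ∧ IsOscillatingTableau n p.2 ∧
      p.1 (Fin.last n) = p.2 (Fin.last n)}

noncomputable def pairEquiv (n : ℕ) :
    PairT n ≃ Σ la : ((v n).support : Finset YoungDiagram), PairAt n la.1 where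
  toFun p :=
    ⟨⟨p.1.1 (Fin.last n), endpoint_mem_support n p.1.1 p.2.1⟩,
      ⟨p.1, ⟨p.2.1, rfl⟩, ⟨p.2.2.1, p.2.2.2.symm⟩⟩⟩
  invFun q := ⟨q.2.1, q.2.2.1.1, q.2.2.2.1, by rw [q.2.2.1.2, q.2.2.2.2]⟩
  left_inv p := rfl
  right_inv := by
    rintro ⟨⟨la, hla⟩, ⟨f, g⟩, ⟨hf, hfl⟩, hg, hgl⟩
    exact Sigma.subtype_ext (Subtype.ext hfl) rfl

lemma pair_count (n : ℕ) : Nat.card (PairT n) = v (2 * n) ⊥ := by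
  rw [Nat.card_congr (pairEquiv n)]
  letI : ∀ la : YoungDiagram, Fintype (WalkTo n la) :=
    fun la => @Fintype.ofFinite _ (walkTo_count n la).1
  letI : ∀ la : ((v n).support : Finset YoungDiagram), Fintype (PairAt n la.1) :=
    fun la => Fintype.ofEquiv _ (pairAtEquiv n la.1).symm
  rw [Nat.card_eq_fintype_card, Fintype.card_sigma]
  have hterm : ∀ la : ((v n).support : Finset YoungDiagram),
      Fintype.card (PairAt n la.1) = v n la.1 * v n la.1 := by
    intro la
    rw [Fintype.card_congr (pairAtEquiv n la.1), Fintype.card_prod,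
      ← Nat.card_eq_fintype_card, (walkTo_count n la.1).2]
  rw [Finset.sum_congr rfl (fun la _ => hterm la)]
  rw [Finset.sum_coe_sort ((v n).support) (fun la => v n la * v n la)]
  have h2 : 2 * n = n + n := by ring
  rw [← BL_eq_sum (v n) (v n), BL_vv, h2]

end OscTab


/-- The number of oscillating tableaux of length `n` ending at `∅` is `(n−1)‼` for even
`n` and `0` for odd `n`; moreover the sum over all diagrams `λ` of the squared number of
oscillating tableaux of length `n` ending at `λ` (i.e. the number of pairs of oscillating
tableaux with the same endpoint) is `(2n−1)‼ = dim BMW_n`. -/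
theorem oscillating_tableaux_count (n : ℕ) :
    (Even n →
      Nat.card {f : Fin (n + 1) → YoungDiagram //
        IsOscillatingTableau n f ∧ f (Fin.last n) = ⊥} = (n - 1)‼) ∧
    (Odd n →
      Nat.card {f : Fin (n + 1) → YoungDiagram //
        IsOscillatingTableau n f ∧ f (Fin.last n) = ⊥} = 0) ∧
    Nat.card {p : (Fin (n + 1) → YoungDiagram) × (Fin (n + 1) → YoungDiagram) //
        IsOscillatingTableau n p.1 ∧ IsOscillatingTableau n p.2 ∧
          p.1 (Fin.last n) = p.2 (Fin.last n)} = (2 * n - 1)‼ := by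
  refine ⟨?_, ?_, ?_⟩
  · intro hn
    obtain ⟨m, hm⟩ := hn
    have h := (OscTab.walkTo_count n ⊥).2
    show Nat.card (OscTab.WalkTo n ⊥) = _
    rw [h]
    have hm2 : n = 2 * m := by omega
    rw [hm2, OscTab.v_bot_even]
  · intro hn
    obtain ⟨m, hm⟩ := hn
    have h := (OscTab.walkTo_count n ⊥).2
    show Nat.card (OscTab.WalkTo n ⊥) = _
    rw [h, hm, OscTab.v_bot_odd]
  · show Nat.card (OscTab.PairT n) = _
    rw [OscTab.pair_count]
    exact OscTab.v_bot_even n
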